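/- Let x₁,x₂,x₃ be a triangle in a d-regular graph with uniform measure μ and rates 1/d. Set ρᵢ = ρ(xᵢ) > 0, gᵢ = ψ(x_{i+1}) − ψ(xᵢ) (cyclic mod 3). Then B^off_△(ρ,ψ) := (μ/d²) Σ_{i=1}^3 [ (1/2)gᵢ²(∂₁θ(ρᵢ,ρ_{i+1})(ρ_{i−1}−ρᵢ) + ∂₂θ(ρᵢ,ρ_{i+1})(ρ_{i+2}−ρ_{i+1})) − gᵢ(g_{i+1}+g_{i−1})θ(ρᵢ,ρ_{i+1}) ] ≥ (1/(2d)) · (μ/d) Σ_{i=1}^3 gᵢ² θ(ρᵢ,ρ_{i+1}) = (1/(2d)) A_△(ρ,ψ). -/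

import Mathlib

/-- The logarithmic mean `θ(s,t) = ∫₀¹ s^(1-p) t^p dp`. -/
noncomputable def logMean (s t : ℝ) : ℝ := ∫ p in (0:ℝ)..1, s ^ (1 - p) * t ^ p

/-- Partial derivative of the logarithmic mean in the first argument. -/
noncomputable def logMean₁ (s t : ℝ) : ℝ := deriv (fun u => logMean u t) s

/-- Partial derivative of the logarithmic mean in the second argument. -/
noncomputable def logMean₂ (s t : ℝ) : ℝ := deriv (fun v => logMean s v) t

open MeasureTheory Metric

lemma logMean_cont_aux (s t : ℝ) (hs : 0 < s) (ht : 0 < t) :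
    Continuous fun p : ℝ => s ^ (1 - p) * t ^ p := by
  have h : (fun p : ℝ => s ^ (1 - p) * t ^ p)
      = fun p : ℝ => Real.exp (Real.log s * (1 - p)) * Real.exp (Real.log t * p) := by
    funext p
    rw [Real.rpow_def_of_pos hs, Real.rpow_def_of_pos ht]
  rw [h]
  exact (Real.continuous_exp.comp (continuous_const.mul (continuous_const.sub continuous_id))).mul
    (Real.continuous_exp.comp (continuous_const.mul continuous_id))

lemma logMean_cont_aux' (s t : ℝ) (hs : 0 < s) (ht : 0 < t) :
    Continuous fun p : ℝ => (1 - p) * s ^ (-p) * t ^ p := by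
  have h : (fun p : ℝ => (1 - p) * s ^ (-p) * t ^ p)
      = fun p : ℝ => (1 - p) * Real.exp (Real.log s * (-p)) * Real.exp (Real.log t * p) := by
    funext p
    rw [Real.rpow_def_of_pos hs, Real.rpow_def_of_pos ht]
  rw [h]
  fun_prop

lemma logMean_symm (s t : ℝ) : logMean s t = logMean t s := by
  unfold logMean
  have h := intervalIntegral.integral_comp_sub_left (a := (0:ℝ)) (b := 1)
    (fun q => t ^ (1 - q) * s ^ q) 1
  simp only [sub_self, sub_zero] at h
  calc (∫ p in (0:ℝ)..1, s ^ (1 - p) * t ^ p)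
      = ∫ p in (0:ℝ)..1, t ^ (1 - (1 - p)) * s ^ (1 - p) := by
        congr 1; funext p; rw [show (1:ℝ) - (1 - p) = p by ring]; ring
    _ = ∫ q in (0:ℝ)..1, t ^ (1 - q) * s ^ q := h

lemma rpow_le_max (a p : ℝ) (ha : 0 < a) (hp0 : 0 ≤ p) (hp1 : p ≤ 1) : a ^ p ≤ max 1 a := by
  rcases le_total a 1 with h | h
  · exact le_max_of_le_left (Real.rpow_le_one ha.le h hp0)
  · refine le_max_of_le_right ?_
    calc a ^ p ≤ a ^ (1:ℝ) := Real.rpow_le_rpow_of_exponent_le h hp1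
      _ = a := Real.rpow_one a

lemma logMean_hasDerivAt (s t : ℝ) (hs : 0 < s) (ht : 0 < t) :
    HasDerivAt (fun u => logMean u t) (∫ p in (0:ℝ)..1, (1 - p) * s ^ (-p) * t ^ p) s := by
  have hε : (0:ℝ) < s / 2 := half_pos hs
  have h := intervalIntegral.hasDerivAt_integral_of_dominated_loc_of_deriv_le
    (μ := volume) (a := (0:ℝ)) (b := 1)
    (F := fun u p => u ^ (1 - p) * t ^ p)
    (F' := fun u p => (1 - p) * u ^ (-p) * t ^ p) (x₀ := s)
    (bound := fun _ => max 1 (2 / s) * max 1 t) (ball_mem_nhds s hε)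
    ?meas ?int ?meas' ?bound ?bint ?diff
  · exact h.2
  case meas =>
    filter_upwards [ball_mem_nhds s hε] with x hx
    have hx0 : 0 < x := by
      rw [mem_ball, Real.dist_eq, abs_sub_lt_iff] at hx
      linarith [hx.2]
    exact ((logMean_cont_aux x t hx0 ht).measurable).aestronglyMeasurable
  case int => exact (logMean_cont_aux s t hs ht).intervalIntegrable 0 1
  case meas' => exact ((logMean_cont_aux' s t hs ht).measurable).aestronglyMeasurable
  case bound =>
    filter_upwards with p hp x hx
    rw [Set.uIoc_of_le (by norm_num : (0:ℝ) ≤ 1)] at hp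
    obtain ⟨hp0, hp1⟩ := hp
    have hx0 : s / 2 < x := by
      rw [mem_ball, Real.dist_eq, abs_sub_lt_iff] at hx
      linarith [hx.2]
    have hx0' : 0 < x := lt_trans hε hx0
    have h1 : |1 - p| ≤ 1 := by rw [abs_le]; constructor <;> linarith
    have h2 : x ^ (-p) ≤ max 1 (2 / s) := by
      have e1 : x ^ (-p) = (x⁻¹) ^ p := by
        rw [Real.rpow_neg hx0'.le, ← Real.inv_rpow hx0'.le]
      have e2 : x⁻¹ ≤ 2 / s := by
        have := one_div_le_one_div_of_le hε hx0.le
        rw [one_div, one_div_div] at this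
        exact this
      rw [e1]
      calc (x⁻¹) ^ p ≤ (2 / s) ^ p :=
            Real.rpow_le_rpow (inv_nonneg.mpr hx0'.le) e2 hp0.le
        _ ≤ max 1 (2 / s) := rpow_le_max _ _ (by positivity) hp0.le hp1
    have h3 : t ^ p ≤ max 1 t := rpow_le_max _ _ ht hp0.le hp1
    have hxnn : 0 ≤ x ^ (-p) := Real.rpow_nonneg hx0'.le _
    have htnn : 0 ≤ t ^ p := Real.rpow_nonneg ht.le _
    have hmax1 : (0:ℝ) ≤ max 1 (2 / s) := le_max_of_le_left zero_le_one
    calc ‖(1 - p) * x ^ (-p) * t ^ p‖ = |1 - p| * x ^ (-p) * t ^ p := by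
          rw [Real.norm_eq_abs, abs_mul, abs_mul, abs_of_nonneg hxnn, abs_of_nonneg htnn]
      _ ≤ 1 * max 1 (2 / s) * max 1 t := by
          apply mul_le_mul (mul_le_mul h1 h2 hxnn zero_le_one) h3 htnn
          positivity
      _ = max 1 (2 / s) * max 1 t := by ring
  case bint => exact intervalIntegrable_const
  case diff =>
    filter_upwards with p hp x hx
    have hx0 : s / 2 < x := by
      rw [mem_ball, Real.dist_eq, abs_sub_lt_iff] at hx
      linarith [hx.2]
    have hx0' : 0 < x := lt_trans hε hx0
    have hd := (Real.hasDerivAt_rpow_const (x := x) (p := 1 - p)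
      (Or.inl hx0'.ne')).mul_const (t ^ p)
    have e : (1:ℝ) - p - 1 = -p := by ring
    rw [e] at hd
    exact hd

lemma logMean₁_eq (s t : ℝ) (hs : 0 < s) (ht : 0 < t) :
    logMean₁ s t = ∫ p in (0:ℝ)..1, (1 - p) * s ^ (-p) * t ^ p :=
  (logMean_hasDerivAt s t hs ht).deriv

lemma logMean₁_nonneg (s t : ℝ) (hs : 0 < s) (ht : 0 < t) : 0 ≤ logMean₁ s t := by
  rw [logMean₁_eq s t hs ht]
  apply intervalIntegral.integral_nonneg (by norm_num)
  intro p hp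
  exact mul_nonneg (mul_nonneg (by linarith [hp.2]) (Real.rpow_nonneg hs.le _))
    (Real.rpow_nonneg ht.le _)

lemma logMean₂_eq_logMean₁ (s t : ℝ) : logMean₂ s t = logMean₁ t s := by
  unfold logMean₂ logMean₁
  congr 1
  funext v
  exact logMean_symm s v

lemma logMean₂_nonneg (s t : ℝ) (hs : 0 < s) (ht : 0 < t) : 0 ≤ logMean₂ s t := by
  rw [logMean₂_eq_logMean₁]
  exact logMean₁_nonneg t s ht hs

lemma logMean_euler (s t : ℝ) (hs : 0 < s) (ht : 0 < t) :
    s * logMean₁ s t + t * logMean₂ s t = logMean s t := by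
  rw [logMean₂_eq_logMean₁, logMean₁_eq s t hs ht, logMean₁_eq t s ht hs]
  have e1 : s * ∫ p in (0:ℝ)..1, (1 - p) * s ^ (-p) * t ^ p
      = ∫ p in (0:ℝ)..1, (1 - p) * (s ^ (1 - p) * t ^ p) := by
    rw [← intervalIntegral.integral_const_mul]
    congr 1
    funext p
    rw [show (1:ℝ) - p = 1 + -p by ring, Real.rpow_add hs, Real.rpow_one]
    ring
  have e2 : t * ∫ p in (0:ℝ)..1, (1 - p) * t ^ (-p) * s ^ p
      = ∫ p in (0:ℝ)..1, p * (s ^ (1 - p) * t ^ p) := by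
    rw [← intervalIntegral.integral_const_mul]
    have h := intervalIntegral.integral_comp_sub_left (a := (0:ℝ)) (b := 1)
      (fun q => q * (s ^ (1 - q) * t ^ q)) 1
    simp only [sub_self, sub_zero] at h
    calc (∫ p in (0:ℝ)..1, t * ((1 - p) * t ^ (-p) * s ^ p))
        = ∫ p in (0:ℝ)..1, (1 - p) * (s ^ (1 - (1 - p)) * t ^ (1 - p)) := by
          congr 1
          funext p
          rw [show (1:ℝ) - p = 1 + -p by ring, Real.rpow_add ht, Real.rpow_one,
            show (1:ℝ) - (1 + -p) = p by ring]
          ring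
      _ = ∫ q in (0:ℝ)..1, q * (s ^ (1 - q) * t ^ q) := h
  rw [e1, e2, ← intervalIntegral.integral_add]
  · unfold logMean
    congr 1
    funext p
    ring
  · exact ((continuous_const.sub continuous_id).mul (logMean_cont_aux s t hs ht)).intervalIntegrable 0 1
  · exact (continuous_id.mul (logMean_cont_aux s t hs ht)).intervalIntegrable 0 1

lemma logMean_key (s t r : ℝ) (hs : 0 < s) (ht : 0 < t) (hr : 0 ≤ r) :
    0 ≤ logMean₁ s t * (r - s) + logMean₂ s t * (r - t) + logMean s t := by
  have he := logMean_euler s t hs ht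
  have h1 := logMean₁_nonneg s t hs ht
  have h2 := logMean₂_nonneg s t hs ht
  nlinarith [mul_nonneg hr h1, mul_nonneg hr h2]

/-- Off-diagonal bound for a triangle `x₁,x₂,x₃` (vertices indexed cyclically by
`ZMod 3`) in a `d`-regular graph with uniform measure `μ`:
`B^off_△(ρ,ψ) ≥ (1/(2d)) A_△(ρ,ψ)`, where `gᵢ = ψ(x_{i+1}) - ψ(xᵢ)`. -/
theorem triangle_offdiag_bound (μ d : ℝ) (hμ : 0 < μ) (hd : 0 < d)
    (ρ : ZMod 3 → ℝ) (hρ : ∀ i, 0 < ρ i) (ψ : ZMod 3 → ℝ) :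
    (μ / d^2) * ∑ i : ZMod 3,
        ((1/2) * (ψ (i+1) - ψ i)^2 *
            (logMean₁ (ρ i) (ρ (i+1)) * (ρ (i-1) - ρ i)
              + logMean₂ (ρ i) (ρ (i+1)) * (ρ (i+2) - ρ (i+1)))
          - (ψ (i+1) - ψ i) * ((ψ (i+2) - ψ (i+1)) + (ψ i - ψ (i-1)))
              * logMean (ρ i) (ρ (i+1)))
      ≥ (1 / (2*d)) * ((μ / d) * ∑ i : ZMod 3, (ψ (i+1) - ψ i)^2 * logMean (ρ i) (ρ (i+1))) := by
  have hsum : ∀ f : ZMod 3 → ℝ, ∑ i : ZMod 3, f i = f 0 + f 1 + f 2 := fun f =>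
    Fin.sum_univ_three f
  rw [hsum, hsum]
  simp only [show (0:ZMod 3)+1 = 1 by decide, show (0:ZMod 3)-1 = 2 by decide,
    show (0:ZMod 3)+2 = 2 by decide, show (1:ZMod 3)+1 = 2 by decide,
    show (1:ZMod 3)-1 = 0 by decide, show (1:ZMod 3)+2 = 0 by decide,
    show (2:ZMod 3)+1 = 0 by decide, show (2:ZMod 3)-1 = 1 by decide,
    show (2:ZMod 3)+2 = 1 by decide]
  have K0 := logMean_key (ρ 0) (ρ 1) (ρ 2) (hρ 0) (hρ 1) (hρ 2).le
  have K1 := logMean_key (ρ 1) (ρ 2) (ρ 0) (hρ 1) (hρ 2) (hρ 0).le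
  have K2 := logMean_key (ρ 2) (ρ 0) (ρ 1) (hρ 2) (hρ 0) (hρ 1).le
  have hc : 0 < μ / d^2 := by positivity
  have hA : ∀ X : ℝ, (1:ℝ) / (2*d) * (μ / d * X) = (μ / d^2) * (X / 2) := by
    intro X
    field_simp
  rw [ge_iff_le, hA]
  apply mul_le_mul_of_nonneg_left _ hc.le
  nlinarith [mul_nonneg (sq_nonneg (ψ 1 - ψ 0)) K0, mul_nonneg (sq_nonneg (ψ 2 - ψ 1)) K1,
    mul_nonneg (sq_nonneg (ψ 0 - ψ 2)) K2]
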